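/- arXiv:1905.12718 — 3 statements merged into one kernel-verified Lean document; each statement's English description precedes it below -/
import Mathlib

section
/- Let ρ(t) = |t|^r with r ≥ 1, let P ∈ 𝒫^ρ_d, let A be an invertible d×d real matrix, b ∈ ℝ^d, α ∈ (0,1), and u ∈ S^{d−1}. Set u_A = (A⁻¹)ᵀu / ‖(A⁻¹)ᵀu‖ and let P_{A,b} be the pushforward of P under z ↦ Az + b. Then H^ρ_{α,u_A}(P_{A,b}) = A·H^ρ_{α,u}(P) + b and the boundary hyperplane satisfies π^ρ_{α,u_A}(P_{A,b}) = A·π^ρ_{α,u}(P) + b, where the right-hand sides denote images of the sets under z ↦ Az + b. -/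
open MeasureTheory Set Filter
open scoped RealInnerProductSpace ENNReal

noncomputable section
set_option linter.unusedSectionVars false
set_option linter.unusedVariables false
set_option maxHeartbeats 1000000

/-- The class `𝒞` of loss functions: convex, nonnegative, even, vanishing only at `0`. -/
def LossClass (ρ : ℝ → ℝ) : Prop :=
  ConvexOn ℝ Set.univ ρ ∧ (∀ t, 0 ≤ ρ t) ∧ (∀ t, ρ (-t) = ρ t) ∧ (∀ t, ρ t = 0 ↔ t = 0)

/-- `ψ` is the left-derivative of `ρ`. -/
def IsLeftDeriv (ρ ψ : ℝ → ℝ) : Prop :=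
  ∀ x : ℝ, HasDerivWithinAt ρ (ψ x) (Set.Iio x) x

/-- `G^ρ_Q(θ) = E_Q[|ψ₋(Y−θ)|·𝟙[Y ≤ θ]] / E_Q[|ψ₋(Y−θ)|]` (equal to `0` when the
denominator vanishes, by the Lean convention for division by zero). -/
def Gfun (ψ : ℝ → ℝ) (Q : Measure ℝ) (θ : ℝ) : ℝ :=
  (∫ y, |ψ (y - θ)| * (if y ≤ θ then 1 else 0) ∂Q) / ∫ y, |ψ (y - θ)| ∂Q

/-- The order-`α` M-quantile `θ^ρ_α(Q) = inf{θ : G^ρ_Q(θ) ≥ α}` of a law `Q` on `ℝ`. -/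
def MQuant (ψ : ℝ → ℝ) (Q : Measure ℝ) (α : ℝ) : ℝ :=
  sInf {θ : ℝ | α ≤ Gfun ψ Q θ}

/-- The pushforward `P_u` of `P` under `z ↦ u'z`. -/
def dirProj {d : ℕ} (P : Measure (EuclideanSpace ℝ (Fin d)))
    (u : EuclideanSpace ℝ (Fin d)) : Measure ℝ :=
  P.map (fun z => ⟪u, z⟫)

/-- The order-`α` M-quantile halfspace `H^ρ_{α,u}(P) = {z : u'z ≥ θ^ρ_α(P_u)}`. -/
def MHalf {d : ℕ} (ψ : ℝ → ℝ) (P : Measure (EuclideanSpace ℝ (Fin d))) (α : ℝ)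
    (u : EuclideanSpace ℝ (Fin d)) : Set (EuclideanSpace ℝ (Fin d)) :=
  {z | MQuant ψ (dirProj P u) α ≤ ⟪u, z⟫}

/-- The order-`α` M-quantile hyperplane `π^ρ_{α,u}(P) = {z : u'z = θ^ρ_α(P_u)}`. -/
def MHyp {d : ℕ} (ψ : ℝ → ℝ) (P : Measure (EuclideanSpace ℝ (Fin d))) (α : ℝ)
    (u : EuclideanSpace ℝ (Fin d)) : Set (EuclideanSpace ℝ (Fin d)) :=
  {z | ⟪u, z⟫ = MQuant ψ (dirProj P u) α}

/-- The order-`α` M-quantile region `R^ρ_α(P) = ⋂_{u ∈ S^{d−1}} H^ρ_{α,u}(P)`. -/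
def MRegion {d : ℕ} (ψ : ℝ → ℝ) (P : Measure (EuclideanSpace ℝ (Fin d))) (α : ℝ) :
    Set (EuclideanSpace ℝ (Fin d)) :=
  ⋂ u ∈ {u : EuclideanSpace ℝ (Fin d) | ‖u‖ = 1}, MHalf ψ P α u

/-- The halfspace M-depth `MD^ρ(z,P) = sup{α > 0 : z ∈ R^ρ_α(P)}` (with `sup ∅ = 0`,
which is the Lean convention for `sSup` of the empty set of reals). -/
def MDepth {d : ℕ} (ψ : ℝ → ℝ) (P : Measure (EuclideanSpace ℝ (Fin d)))
    (z : EuclideanSpace ℝ (Fin d)) : ℝ :=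
  sSup {α : ℝ | α ∈ Set.Ioo (0 : ℝ) 1 ∧ z ∈ MRegion ψ P α}

/-- The C-support `C_P = {z : P[{y : u'y ≤ u'z}] > 0 for every unit u}`. -/
def Csupport {d : ℕ} (P : Measure (EuclideanSpace ℝ (Fin d))) :
    Set (EuclideanSpace ℝ (Fin d)) :=
  {z | ∀ u : EuclideanSpace ℝ (Fin d), ‖u‖ = 1 → 0 < P {y | ⟪u, y⟫ ≤ ⟪u, z⟫}}

def gg (r θ y : ℝ) : ℝ := r * |y - θ| ^ (r - 1)

lemma gg_nonneg {r : ℝ} (hr : 1 ≤ r) (θ y : ℝ) : 0 ≤ gg r θ y :=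
  mul_nonneg (by linarith) (Real.rpow_nonneg (abs_nonneg _) _)

lemma gg_cont {r : ℝ} (hr : 1 ≤ r) (θ : ℝ) : Continuous (gg r θ) := by
  have h : Continuous fun x : ℝ => x ^ (r - 1) := Real.continuous_rpow_const (by linarith)
  exact continuous_const.mul (h.comp ((continuous_id.sub continuous_const).abs))

lemma gg_meas {r : ℝ} (hr : 1 ≤ r) (θ : ℝ) : Measurable (gg r θ) := (gg_cont hr θ).measurable

lemma gg_mono {r : ℝ} (hr : 1 ≤ r) {θ θ' y : ℝ} (h : |y - θ'| ≤ |y - θ|) :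
    gg r θ' y ≤ gg r θ y :=
  mul_le_mul_of_nonneg_left (Real.rpow_le_rpow (abs_nonneg _) h (by linarith)) (by linarith)

lemma gg_lb {r : ℝ} (hr : 1 ≤ r) {θ c y : ℝ} (hc : 0 ≤ c) (h : c ≤ |y - θ|) :
    r * c ^ (r - 1) ≤ gg r θ y :=
  mul_le_mul_of_nonneg_left (Real.rpow_le_rpow hc h (by linarith)) (by linarith)

lemma Gfun_eq {r : ℝ} {ψ : ℝ → ℝ} (hab : ∀ t, |ψ t| = r * |t| ^ (r - 1))
    (Q : Measure ℝ) (θ : ℝ) :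
    Gfun ψ Q θ = (∫ y, gg r θ y * (if y ≤ θ then 1 else 0) ∂Q) / ∫ y, gg r θ y ∂Q := by
  simp only [Gfun, hab, gg]

section Core

variable {r : ℝ} (hr : 1 ≤ r) {ψ : ℝ → ℝ} (hab : ∀ t, |ψ t| = r * |t| ^ (r - 1))
  (Q : Measure ℝ) [IsProbabilityMeasure Q]
  (h2 : ∀ θ : ℝ, Integrable (fun t => |ψ (t - θ)|) Q)

include hab h2 in
lemma gg_int (θ : ℝ) : Integrable (gg r θ) Q :=
  (h2 θ).congr (ae_of_all _ fun t => hab (t - θ))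

include hr hab h2 in
lemma gg_mul_int {f : ℝ → ℝ} (hm : Measurable f) (hf0 : ∀ y, 0 ≤ f y) (hf1 : ∀ y, f y ≤ 1)
    (θ : ℝ) : Integrable (fun y => gg r θ y * f y) Q := by
  refine (gg_int hab Q h2 θ).mono (((gg_meas hr θ).mul hm).aestronglyMeasurable)
    (ae_of_all _ fun y => ?_)
  rw [Real.norm_eq_abs, Real.norm_eq_abs, abs_of_nonneg (gg_nonneg hr θ y),
    abs_of_nonneg (mul_nonneg (gg_nonneg hr θ y) (hf0 y))]
  calc gg r θ y * f y ≤ gg r θ y * 1 := mul_le_mul_of_nonneg_left (hf1 y) (gg_nonneg hr θ y)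
    _ = gg r θ y := mul_one _

lemma meas_ite_le (θ : ℝ) : Measurable fun y : ℝ => (if y ≤ θ then (1:ℝ) else 0) :=
  Measurable.ite measurableSet_Iic measurable_const measurable_const

lemma meas_ite_ge (θ : ℝ) : Measurable fun y : ℝ => (if θ ≤ y then (1:ℝ) else 0) :=
  Measurable.ite measurableSet_Ici measurable_const measurable_const

lemma ite_le_nonneg (θ y : ℝ) : 0 ≤ (if y ≤ θ then (1:ℝ) else 0) := by positivity
lemma ite_le_le_one (θ y : ℝ) : (if y ≤ θ then (1:ℝ) else 0) ≤ 1 := by split <;> norm_num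
lemma ite_ge_nonneg (θ y : ℝ) : 0 ≤ (if θ ≤ y then (1:ℝ) else 0) := by positivity
lemma ite_ge_le_one (θ y : ℝ) : (if θ ≤ y then (1:ℝ) else 0) ≤ 1 := by split <;> norm_num

lemma integral_ite_le (θ₀ : ℝ) :
    ∫ y, (if y ≤ θ₀ then (1:ℝ) else 0) ∂Q = (Q (Iic θ₀)).toReal := by
  rw [← measureReal_def, ← integral_indicator_one measurableSet_Iic]
  congr 1

lemma integral_ite_ge (θ₀ : ℝ) :
    ∫ y, (if θ₀ ≤ y then (1:ℝ) else 0) ∂Q = (Q (Ici θ₀)).toReal := by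
  rw [← measureReal_def, ← integral_indicator_one measurableSet_Ici]
  congr 1

variable (h1 : ∀ x : ℝ, Q {x} < 1)

include hr hab h2 h1 in
lemma D_pos (θ : ℝ) : 0 < ∫ y, gg r θ y ∂Q := by
  refine (integral_pos_iff_support_of_nonneg (gg_nonneg hr θ) (gg_int hab Q h2 θ)).mpr ?_
  have hne : Q {θ}ᶜ ≠ 0 := by
    intro h0
    have h3 := measure_union_le (μ := Q) {θ} {θ}ᶜ
    rw [union_compl_self, h0, add_zero, measure_univ] at h3
    exact absurd (lt_of_le_of_lt h3 (h1 θ)) (lt_irrefl _)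
  refine lt_of_lt_of_le (pos_iff_ne_zero.mpr hne) (measure_mono fun y hy => ?_)
  exact ne_of_gt (mul_pos (by linarith)
    (Real.rpow_pos_of_pos (abs_pos.mpr (sub_ne_zero.mpr (Set.mem_compl_singleton_iff.mp hy))) _))



lemma exists_cdf_ge {α : ℝ} (hα : α < 1) : ∃ θ₀ : ℝ, ENNReal.ofReal α < Q (Iic θ₀) := by
  have hmono : Monotone fun n : ℕ => Iic ((n : ℝ)) := fun m n h =>
    Iic_subset_Iic.mpr (by exact_mod_cast h)
  have ht := tendsto_measure_iUnion_atTop (μ := Q) hmono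
  have huniv : ⋃ n : ℕ, Iic ((n : ℝ)) = univ := by
    ext x
    simp only [mem_iUnion, mem_Iic, mem_univ, iff_true]
    exact exists_nat_ge x
  rw [huniv, measure_univ] at ht
  have hev : ∀ᶠ n : ℕ in atTop, ENNReal.ofReal α < Q (Iic (n : ℝ)) :=
    ht.eventually (eventually_gt_nhds (ENNReal.ofReal_lt_one.mpr hα))
  obtain ⟨n, hn⟩ := hev.exists
  exact ⟨n, hn⟩

lemma exists_cdf_lt {α : ℝ} (hα : 0 < α) : ∃ θ₁ : ℝ, Q (Iic θ₁) < ENNReal.ofReal α := by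
  have hanti : Antitone fun n : ℕ => Iic (-(n : ℝ)) := fun m n h =>
    Iic_subset_Iic.mpr (by exact_mod_cast neg_le_neg (by exact_mod_cast h))
  have ht := tendsto_measure_iInter_atTop (μ := Q)
    (fun n => (measurableSet_Iic).nullMeasurableSet) hanti ⟨0, measure_ne_top _ _⟩
  have hempty : ⋂ n : ℕ, Iic (-(n : ℝ)) = ∅ := by
    ext x
    simp only [mem_iInter, mem_Iic, mem_empty_iff_false, iff_false, not_forall, not_le]
    obtain ⟨n, hn⟩ := exists_nat_gt (-x)
    exact ⟨n, by linarith⟩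
  rw [hempty, measure_empty] at ht
  have hev : ∀ᶠ n : ℕ in atTop, Q (Iic (-(n : ℝ))) < ENNReal.ofReal α :=
    ht.eventually (eventually_lt_nhds (by simpa using ENNReal.ofReal_pos.mpr hα))
  obtain ⟨n, hn⟩ := hev.exists
  exact ⟨-(n : ℝ), hn⟩

lemma exists_ici_pos : ∃ θ₁ : ℝ, 0 < Q (Ici θ₁) := by
  have hmono : Monotone fun n : ℕ => Ici (-(n : ℝ)) := fun m n h =>
    Ici_subset_Ici.mpr (by exact_mod_cast neg_le_neg (by exact_mod_cast h))
  have ht := tendsto_measure_iUnion_atTop (μ := Q) hmono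
  have huniv : ⋃ n : ℕ, Ici (-(n : ℝ)) = univ := by
    ext x
    simp only [mem_iUnion, mem_Ici, mem_univ, iff_true]
    obtain ⟨n, hn⟩ := exists_nat_gt (-x)
    exact ⟨n, by linarith⟩
  rw [huniv, measure_univ] at ht
  have hev : ∀ᶠ n : ℕ in atTop, 0 < Q (Ici (-(n : ℝ))) :=
    ht.eventually (eventually_gt_nhds zero_lt_one)
  obtain ⟨n, hn⟩ := hev.exists
  exact ⟨-(n : ℝ), hn⟩

include hr hab h2 in
lemma ite_le_int (θ : ℝ) : Integrable (fun y => if y ≤ θ then (1:ℝ) else 0) Q := by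
  refine (integrable_const (1:ℝ)).mono ((meas_ite_le θ).aestronglyMeasurable)
    (ae_of_all _ fun y => ?_)
  rw [Real.norm_eq_abs]
  split <;> simp

include hr hab h2 in
lemma ite_ge_int (θ : ℝ) : Integrable (fun y => if θ ≤ y then (1:ℝ) else 0) Q := by
  refine (integrable_const (1:ℝ)).mono ((meas_ite_ge θ).aestronglyMeasurable)
    (ae_of_all _ fun y => ?_)
  rw [Real.norm_eq_abs]
  split <;> simp

include hr hab h2 h1 in
lemma S_nonempty {α : ℝ} (hα : α ∈ Set.Ioo (0:ℝ) 1) :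
    {θ : ℝ | α ≤ Gfun ψ Q θ}.Nonempty := by
  obtain ⟨hα0, hα1⟩ := hα
  rcases eq_or_lt_of_le hr with hr1 | hr1
  · -- r = 1
    have hG : ∀ θ, Gfun ψ Q θ = (Q (Iic θ)).toReal := by
      intro θ
      have hgg1 : ∀ y : ℝ, gg r θ y = 1 := by
        intro y; rw [gg, ← hr1]; simp [Real.rpow_zero]
      rw [Gfun_eq hab]
      simp only [hgg1, one_mul]
      rw [integral_ite_le Q, integral_const, probReal_univ, smul_eq_mul,
        one_mul, div_one]
    obtain ⟨θ₀, hθ₀⟩ := exists_cdf_ge Q hα1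
    refine ⟨θ₀, ?_⟩
    rw [mem_setOf_eq, hG]
    calc α = (ENNReal.ofReal α).toReal := (ENNReal.toReal_ofReal hα0.le).symm
      _ ≤ (Q (Iic θ₀)).toReal := ENNReal.toReal_mono (measure_ne_top _ _) hθ₀.le
  · -- r > 1
    obtain ⟨θ₀, hθ₀⟩ := exists_cdf_ge Q hα1
    set q := (Q (Iic θ₀)).toReal with hqdef
    have hq : 0 < q :=
      ENNReal.toReal_pos (ne_of_gt (lt_of_le_of_lt zero_le hθ₀)) (measure_ne_top _ _)
    set C := ∫ y, gg r θ₀ y * (if θ₀ ≤ y then 1 else 0) ∂Q with hCdef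
    have hC0 : 0 ≤ C :=
      integral_nonneg fun y => mul_nonneg (gg_nonneg hr θ₀ y) (ite_ge_nonneg θ₀ y)
    have hp : 0 < r - 1 := by linarith
    obtain ⟨x, hxK, hx1⟩ := (((tendsto_rpow_atTop hp).eventually_ge_atTop
      (α * C / ((1 - α) * r * q))).and (eventually_ge_atTop (1:ℝ))).exists
    have hx0 : (0:ℝ) < x := by linarith
    set θ := θ₀ + x with hθdef
    have hθ₀θ : θ₀ ≤ θ := by simp [hθdef]; linarith
    -- lower bound on numerator
    have hN1 : r * x ^ (r - 1) * q ≤ ∫ y, gg r θ y * (if y ≤ θ then 1 else 0) ∂Q := by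
      have hpt : ∀ y, (r * x ^ (r - 1)) * (if y ≤ θ₀ then (1:ℝ) else 0)
          ≤ gg r θ y * (if y ≤ θ then 1 else 0) := by
        intro y
        by_cases hy : y ≤ θ₀
        · rw [if_pos hy, if_pos (hy.trans hθ₀θ), mul_one, mul_one]
          refine gg_lb hr hx0.le ?_
          rw [abs_of_nonpos (by linarith)]
          simp [hθdef]; linarith
        · rw [if_neg hy, mul_zero]
          exact mul_nonneg (gg_nonneg hr θ y) (ite_le_nonneg θ y)
      calc r * x ^ (r - 1) * q
          = ∫ y, (r * x ^ (r - 1)) * (if y ≤ θ₀ then (1:ℝ) else 0) ∂Q := by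
            rw [integral_const_mul, integral_ite_le Q]
        _ ≤ _ := integral_mono
            ((ite_le_int hr hab Q h2 θ₀).const_mul _)
            (gg_mul_int hr hab Q h2 (meas_ite_le θ) (ite_le_nonneg θ) (ite_le_le_one θ) θ)
            hpt
    -- upper bound on denominator
    have hD1 : ∫ y, gg r θ y ∂Q
        ≤ (∫ y, gg r θ y * (if y ≤ θ then 1 else 0) ∂Q) + C := by
      rw [hCdef, ← integral_add
        (gg_mul_int hr hab Q h2 (meas_ite_le θ) (ite_le_nonneg θ) (ite_le_le_one θ) θ)
        (gg_mul_int hr hab Q h2 (meas_ite_ge θ₀) (ite_ge_nonneg θ₀) (ite_ge_le_one θ₀) θ₀)]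
      refine integral_mono (gg_int hab Q h2 θ) (Integrable.add
        (gg_mul_int hr hab Q h2 (meas_ite_le θ) (ite_le_nonneg θ) (ite_le_le_one θ) θ)
        (gg_mul_int hr hab Q h2 (meas_ite_ge θ₀) (ite_ge_nonneg θ₀) (ite_ge_le_one θ₀) θ₀))
        fun y => ?_
      by_cases hy : y ≤ θ
      · rw [if_pos hy, mul_one]
        exact le_add_of_nonneg_right (mul_nonneg (gg_nonneg hr θ₀ y) (ite_ge_nonneg θ₀ y))
      · push_neg at hy
        rw [if_neg (not_le.mpr hy), mul_zero, zero_add, if_pos (by linarith : θ₀ ≤ y), mul_one]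
        refine gg_mono hr ?_
        rw [abs_of_pos (by linarith : (0:ℝ) < y - θ), abs_of_pos (by linarith : (0:ℝ) < y - θ₀)]
        linarith
    have hKx : α * C ≤ x ^ (r - 1) * ((1 - α) * r * q) := by
      rw [div_le_iff₀ (mul_pos (mul_pos (by linarith : (0:ℝ) < 1 - α) (by linarith : (0:ℝ) < r)) hq)] at hxK
      linarith
    refine ⟨θ, ?_⟩
    rw [mem_setOf_eq, Gfun_eq hab, le_div_iff₀ (D_pos hr hab Q h2 h1 θ)]
    set N := ∫ y, gg r θ y * (if y ≤ θ then 1 else 0) ∂Q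
    set D := ∫ y, gg r θ y ∂Q
    nlinarith [hN1, hD1, hKx, mul_le_mul_of_nonneg_left hD1 hα0.le,
      mul_le_mul_of_nonneg_left hN1 (by linarith : (0:ℝ) ≤ 1 - α)]

include hr hab h2 h1 in
lemma S_bddBelow {α : ℝ} (hα : α ∈ Set.Ioo (0:ℝ) 1) :
    BddBelow {θ : ℝ | α ≤ Gfun ψ Q θ} := by
  obtain ⟨hα0, hα1⟩ := hα
  rcases eq_or_lt_of_le hr with hr1 | hr1
  · -- r = 1
    have hG : ∀ θ, Gfun ψ Q θ = (Q (Iic θ)).toReal := by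
      intro θ
      have hgg1 : ∀ y : ℝ, gg r θ y = 1 := by
        intro y; rw [gg, ← hr1]; simp [Real.rpow_zero]
      rw [Gfun_eq hab]
      simp only [hgg1, one_mul]
      rw [integral_ite_le Q, integral_const, probReal_univ, smul_eq_mul,
        one_mul, div_one]
    obtain ⟨θ₁, hθ₁⟩ := exists_cdf_lt Q hα0
    refine ⟨θ₁, fun θ hθ => ?_⟩
    by_contra hlt
    push_neg at hlt
    rw [mem_setOf_eq, hG θ] at hθ
    have h4 : Q (Iic θ) < ENNReal.ofReal α :=
      lt_of_le_of_lt (measure_mono (Iic_subset_Iic.mpr hlt.le)) hθ₁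
    have h5 : (Q (Iic θ)).toReal < α := by
      have := (ENNReal.toReal_lt_toReal (measure_ne_top _ _) ENNReal.ofReal_ne_top).mpr h4
      rwa [ENNReal.toReal_ofReal hα0.le] at this
    linarith
  · -- r > 1
    obtain ⟨θ₁, hp0⟩ := exists_ici_pos Q
    set p := (Q (Ici θ₁)).toReal with hpdef
    have hp : 0 < p := ENNReal.toReal_pos (ne_of_gt hp0) (measure_ne_top _ _)
    set C := ∫ y, gg r θ₁ y * (if y ≤ θ₁ then 1 else 0) ∂Q with hCdef
    have hC0 : 0 ≤ C :=
      integral_nonneg fun y => mul_nonneg (gg_nonneg hr θ₁ y) (ite_le_nonneg θ₁ y)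
    have hpexp : 0 < r - 1 := by linarith
    obtain ⟨x, hxK, hx1⟩ := (((tendsto_rpow_atTop hpexp).eventually_ge_atTop
      ((1 - α) * C / (α * r * p) + 1)).and (eventually_ge_atTop (1:ℝ))).exists
    have hx0 : (0:ℝ) < x := by linarith
    refine ⟨θ₁ - x, fun θ hθ => ?_⟩
    by_contra hlt
    push_neg at hlt
    have hθθ₁ : θ < θ₁ := by linarith
    rw [mem_setOf_eq, Gfun_eq hab, le_div_iff₀ (D_pos hr hab Q h2 h1 θ)] at hθ
    set N := ∫ y, gg r θ y * (if y ≤ θ then 1 else 0) ∂Q with hNdef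
    set D := ∫ y, gg r θ y ∂Q with hDdef
    have hN0 : 0 ≤ N :=
      integral_nonneg fun y => mul_nonneg (gg_nonneg hr θ y) (ite_le_nonneg θ y)
    have hN1 : N ≤ C := by
      refine integral_mono
        (gg_mul_int hr hab Q h2 (meas_ite_le θ) (ite_le_nonneg θ) (ite_le_le_one θ) θ)
        (gg_mul_int hr hab Q h2 (meas_ite_le θ₁) (ite_le_nonneg θ₁) (ite_le_le_one θ₁) θ₁)
        fun y => ?_
      by_cases hy : y ≤ θ
      · rw [if_pos hy, if_pos (by linarith : y ≤ θ₁), mul_one, mul_one]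
        refine gg_mono hr ?_
        rw [abs_of_nonpos (by linarith : y - θ ≤ 0), abs_of_nonpos (by linarith : y - θ₁ ≤ 0)]
        linarith
      · rw [if_neg hy, mul_zero]
        exact mul_nonneg (gg_nonneg hr θ₁ y) (ite_le_nonneg θ₁ y)
    have hD1 : N + r * (θ₁ - θ) ^ (r - 1) * p ≤ D := by
      have heq : ∫ y, (r * (θ₁ - θ) ^ (r - 1)) * (if θ₁ ≤ y then (1:ℝ) else 0) ∂Q
          = r * (θ₁ - θ) ^ (r - 1) * p := by
        rw [integral_const_mul, integral_ite_ge Q]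
      rw [← heq, hNdef, ← integral_add
        (gg_mul_int hr hab Q h2 (meas_ite_le θ) (ite_le_nonneg θ) (ite_le_le_one θ) θ)
        ((ite_ge_int hr hab Q h2 θ₁).const_mul _)]
      refine integral_mono (Integrable.add
        (gg_mul_int hr hab Q h2 (meas_ite_le θ) (ite_le_nonneg θ) (ite_le_le_one θ) θ)
        ((ite_ge_int hr hab Q h2 θ₁).const_mul _)) (gg_int hab Q h2 θ) fun y => ?_
      by_cases hy : y ≤ θ
      · rw [if_pos hy, if_neg (by push_neg; linarith : ¬ θ₁ ≤ y), mul_zero, add_zero, mul_one]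
      · push_neg at hy
        rw [if_neg (not_le.mpr hy), mul_zero, zero_add]
        by_cases hy2 : θ₁ ≤ y
        · rw [if_pos hy2, mul_one]
          refine gg_lb hr (by linarith : (0:ℝ) ≤ θ₁ - θ) ?_
          rw [abs_of_pos (by linarith : (0:ℝ) < y - θ)]
          linarith
        · rw [if_neg hy2, mul_zero]
          exact gg_nonneg hr θ y
    have hxmono : x ^ (r - 1) ≤ (θ₁ - θ) ^ (r - 1) :=
      Real.rpow_le_rpow (by linarith) (by linarith) (by linarith)
    have hKx : (1 - α) * C + α * r * p ≤ α * r * p * x ^ (r - 1) := by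
      have h6 : (1 - α) * C / (α * r * p) * (α * r * p) = (1 - α) * C := by
        field_simp
      nlinarith [mul_pos (mul_pos hα0 (by linarith : (0:ℝ) < r)) hp,
        mul_le_mul_of_nonneg_left hxK (le_of_lt (mul_pos (mul_pos hα0
          (by linarith : (0:ℝ) < r)) hp))]
    have hfin : (0:ℝ) < α * r * p := mul_pos (mul_pos hα0 (by linarith)) hp
    nlinarith [mul_le_mul_of_nonneg_left hD1 hα0.le,
      mul_le_mul_of_nonneg_left hN1 (by linarith : (0:ℝ) ≤ 1 - α),
      mul_le_mul_of_nonneg_left hxmono hfin.le, hKx, hθ, hN0, hfin]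

include hr hab h2 in
lemma Gfun_map {c β : ℝ} (hc : 0 < c) (θ : ℝ) :
    Gfun ψ (Q.map (fun t => c * t + β)) θ = Gfun ψ Q ((θ - β) / c) := by
  set θ' := (θ - β) / c with hθ'def
  have hmap : AEMeasurable (fun t : ℝ => c * t + β) Q :=
    ((measurable_const.mul measurable_id).add_const β).aemeasurable
  have hk : (0:ℝ) < c ^ (r - 1) := Real.rpow_pos_of_pos hc _
  rw [Gfun_eq hab, Gfun_eq hab]
  rw [integral_map (f := fun y => gg r θ y * (if y ≤ θ then 1 else 0)) hmap (((gg_meas hr θ).mul (meas_ite_le θ)).aestronglyMeasurable),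
    integral_map hmap ((gg_meas hr θ).aestronglyMeasurable)]
  have hsub : ∀ t : ℝ, c * t + β - θ = c * (t - θ') := by
    intro t
    rw [hθ'def]
    field_simp
    ring
  have hgg : ∀ t : ℝ, gg r θ (c * t + β) = c ^ (r - 1) * gg r θ' t := by
    intro t
    rw [gg, gg]
    have : |c * t + β - θ| = c * |t - θ'| := by
      rw [hsub t, abs_mul, abs_of_pos hc]
    rw [this, Real.mul_rpow hc.le (abs_nonneg _)]
    ring
  have hite : ∀ t : ℝ, (if c * t + β ≤ θ then (1:ℝ) else 0) = (if t ≤ θ' then (1:ℝ) else 0) := by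
    intro t
    refine if_congr ?_ rfl rfl
    rw [hθ'def, le_div_iff₀ hc]
    constructor <;> intro h <;> nlinarith
  have e1 : ∫ t, gg r θ (c * t + β) * (if c * t + β ≤ θ then (1:ℝ) else 0) ∂Q
      = c ^ (r - 1) * ∫ t, gg r θ' t * (if t ≤ θ' then (1:ℝ) else 0) ∂Q := by
    rw [← integral_const_mul]
    congr 1
    ext t
    rw [hgg t, hite t]
    ring
  have e2 : ∫ t, gg r θ (c * t + β) ∂Q = c ^ (r - 1) * ∫ t, gg r θ' t ∂Q := by
    rw [← integral_const_mul]
    congr 1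
    ext t
    exact hgg t
  rw [e1, e2, mul_div_mul_left _ _ (ne_of_gt hk)]

include hr hab h2 h1 in
lemma MQuant_affine {α : ℝ} (hα : α ∈ Set.Ioo (0:ℝ) 1) {c β : ℝ} (hc : 0 < c) :
    MQuant ψ (Q.map (fun t => c * t + β)) α = c * MQuant ψ Q α + β := by
  have himg : {θ : ℝ | α ≤ Gfun ψ (Q.map (fun t => c * t + β)) θ}
      = (fun x => c * x + β) '' {θ : ℝ | α ≤ Gfun ψ Q θ} := by
    ext θ
    simp only [mem_setOf_eq, mem_image, Gfun_map hr hab Q h2 hc]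
    constructor
    · intro hθ
      exact ⟨(θ - β) / c, hθ, by field_simp; ring⟩
    · rintro ⟨s, hs, rfl⟩
      have : (c * s + β - β) / c = s := by field_simp; ring
      rwa [this]
  have hmono : Monotone fun x : ℝ => c * x + β := fun a b h => by simp only; nlinarith
  have hcont : ContinuousAt (fun x : ℝ => c * x + β) (sInf {θ : ℝ | α ≤ Gfun ψ Q θ}) :=
    ((continuous_const.mul continuous_id).add continuous_const).continuousAt
  rw [MQuant, MQuant, himg,
    ← Monotone.map_csInf_of_continuousAt hcont hmono (S_nonempty hr hab Q h2 h1 hα)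
      (S_bddBelow hr hab Q h2 h1 hα)]

end Core

lemma psi_abs {r : ℝ} (hr : 1 ≤ r) {ψ : ℝ → ℝ}
    (hψ : IsLeftDeriv (fun t : ℝ => |t| ^ r) ψ) (t : ℝ) :
    |ψ t| = r * |t| ^ (r - 1) := by
  have hr0 : (0:ℝ) < r := lt_of_lt_of_le one_pos hr
  rcases le_or_gt t 0 with ht | ht
  · have h0 : HasDerivAt (fun y : ℝ => y ^ r) (r * (-t) ^ (r - 1)) (-t) :=
      Real.hasDerivAt_rpow_const (Or.inr hr)
    have h1 : HasDerivAt (fun x : ℝ => (-x) ^ r) (r * (-t) ^ (r - 1) * (-1)) t :=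
      h0.comp t (hasDerivAt_neg t)
    have h2 : HasDerivWithinAt (fun x : ℝ => |x| ^ r) (r * (-t) ^ (r - 1) * (-1)) (Iio t) t := by
      refine (h1.hasDerivWithinAt (s := Iio t)).congr (fun x hx => ?_) ?_
      · rw [abs_of_nonpos (le_of_lt (lt_of_lt_of_le hx ht))]
      · rw [abs_of_nonpos ht]
    have := (uniqueDiffWithinAt_Iio t).eq_deriv _ (hψ t) h2
    rw [this, abs_of_nonpos ht]
    rw [abs_of_nonpos]
    · ring
    · have : (0:ℝ) ≤ (-t) ^ (r-1) := Real.rpow_nonneg (by linarith) _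
      nlinarith
  · have h0 : HasDerivAt (fun y : ℝ => y ^ r) (r * t ^ (r - 1)) t :=
      Real.hasDerivAt_rpow_const (Or.inr hr)
    have h1 : HasDerivAt (fun x : ℝ => |x| ^ r) (r * t ^ (r - 1)) t := by
      refine h0.congr_of_eventuallyEq ?_
      filter_upwards [eventually_gt_nhds ht] with x hx
      rw [abs_of_pos hx]
    have := (uniqueDiffWithinAt_Iio t).eq_deriv _ (hψ t) h1.hasDerivWithinAt
    rw [this, abs_of_pos ht, abs_of_pos]
    positivity

theorem stmt_5 {d : ℕ} (hd : 0 < d) (r : ℝ) (hr : 1 ≤ r) (ρ ψ : ℝ → ℝ)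
    (hρ : ρ = fun t : ℝ => |t| ^ r) (hψ : IsLeftDeriv ρ ψ)
    (P : Measure (EuclideanSpace ℝ (Fin d))) [IsProbabilityMeasure P]
    (hP1 : ∀ u : EuclideanSpace ℝ (Fin d), ‖u‖ = 1 → ∀ c : ℝ, P {z | ⟪u, z⟫ = c} < 1)
    (hP2 : ∀ u : EuclideanSpace ℝ (Fin d), ‖u‖ = 1 → ∀ θ : ℝ,
      Integrable (fun t => |ψ (t - θ)|) (dirProj P u))
    (A : EuclideanSpace ℝ (Fin d) ≃L[ℝ] EuclideanSpace ℝ (Fin d))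
    (b : EuclideanSpace ℝ (Fin d)) (α : ℝ) (hα : α ∈ Set.Ioo (0 : ℝ) 1)
    (u uA : EuclideanSpace ℝ (Fin d)) (hu : ‖u‖ = 1)
    (huA : uA = ‖(ContinuousLinearMap.adjoint
        (A.symm : EuclideanSpace ℝ (Fin d) →L[ℝ] EuclideanSpace ℝ (Fin d))) u‖⁻¹ •
      (ContinuousLinearMap.adjoint
        (A.symm : EuclideanSpace ℝ (Fin d) →L[ℝ] EuclideanSpace ℝ (Fin d))) u) :
    MHalf ψ (P.map (fun z => A z + b)) α uA = (fun z => A z + b) '' MHalf ψ P α u ∧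
    MHyp ψ (P.map (fun z => A z + b)) α uA = (fun z => A z + b) '' MHyp ψ P α u := by
  subst hρ
  have hab : ∀ t, |ψ t| = r * |t| ^ (r - 1) := psi_abs hr hψ
  set v : EuclideanSpace ℝ (Fin d) := (ContinuousLinearMap.adjoint
    (A.symm : EuclideanSpace ℝ (Fin d) →L[ℝ] EuclideanSpace ℝ (Fin d))) u with hvdef
  have hvA : ∀ w : EuclideanSpace ℝ (Fin d), ⟪v, w⟫ = ⟪u, A.symm w⟫ := by
    intro w
    rw [hvdef, ContinuousLinearMap.adjoint_inner_left]
    rfl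
  have hv0 : v ≠ 0 := by
    intro h
    have h1' := hvA (A u)
    rw [h, inner_zero_left] at h1'
    simp only [ContinuousLinearEquiv.symm_apply_apply] at h1'
    have : ⟪u, u⟫ = 1 := by
      rw [real_inner_self_eq_norm_sq, hu]; norm_num
    rw [this] at h1'
    norm_num at h1'
  set c : ℝ := ‖v‖⁻¹ with hcdef
  have hc : 0 < c := inv_pos.mpr (norm_pos_iff.mpr hv0)
  set β : ℝ := c * ⟪u, A.symm b⟫ with hβdef
  have hinner : ∀ z : EuclideanSpace ℝ (Fin d), ⟪uA, A z + b⟫ = c * ⟪u, z⟫ + β := by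
    intro z
    rw [huA, real_inner_smul_left, hvA]
    have hsm : A.symm (A z + b) = z + A.symm b := by
      rw [map_add, ContinuousLinearEquiv.symm_apply_apply]
    rw [hsm, inner_add_right, hβdef]
    ring
  have hproj : ∀ w : EuclideanSpace ℝ (Fin d),
      Measurable fun z : EuclideanSpace ℝ (Fin d) => ⟪w, z⟫ := by
    intro w
    exact (continuous_const.inner continuous_id).measurable
  have hφmeas : Measurable fun z : EuclideanSpace ℝ (Fin d) => A z + b :=
    (A.continuous.add continuous_const).measurable
  haveI : IsProbabilityMeasure (dirProj P u) := by
    rw [dirProj]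
    exact Measure.isProbabilityMeasure_map (hproj u).aemeasurable
  have hmapeq : dirProj (P.map (fun z => A z + b)) uA
      = (dirProj P u).map (fun t => c * t + β) := by
    rw [dirProj, dirProj, Measure.map_map (hproj uA) hφmeas,
      Measure.map_map (show Measurable fun t : ℝ => c * t + β from
        (measurable_id'.const_mul c).add_const β) (hproj u)]
    congr 1
    funext z
    simp only [Function.comp_apply]
    exact hinner z
  have hQ1 : ∀ x : ℝ, (dirProj P u) {x} < 1 := by
    intro x
    rw [dirProj, Measure.map_apply (hproj u) (measurableSet_singleton x)]
    exact hP1 u hu x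
  have key := MQuant_affine hr hab (dirProj P u) (hP2 u hu) hQ1 hα hc (β := β)
  rw [← hmapeq] at key
  set m := MQuant ψ (dirProj P u) α with hmdef
  constructor
  · ext z
    simp only [MHalf, mem_setOf_eq, mem_image, key]
    constructor
    · intro hz
      refine ⟨A.symm (z - b), ?_, ?_⟩
      · have hzw : A (A.symm (z - b)) + b = z := by
          rw [ContinuousLinearEquiv.apply_symm_apply]
          abel
        rw [← hzw, hinner] at hz
        have := (mul_le_mul_iff_right₀ hc).mp (by linarith : c * m ≤ c * ⟪u, A.symm (z - b)⟫)
        exact this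
      · rw [ContinuousLinearEquiv.apply_symm_apply]
        abel
    · rintro ⟨w, hw, rfl⟩
      rw [hinner w]
      nlinarith
  · ext z
    simp only [MHyp, mem_setOf_eq, mem_image, key]
    constructor
    · intro hz
      refine ⟨A.symm (z - b), ?_, ?_⟩
      · have hzw : A (A.symm (z - b)) + b = z := by
          rw [ContinuousLinearEquiv.apply_symm_apply]
          abel
        rw [← hzw, hinner] at hz
        have : c * ⟪u, A.symm (z - b)⟫ = c * m := by linarith
        exact (mul_left_cancel₀ (ne_of_gt hc) this)
      · rw [ContinuousLinearEquiv.apply_symm_apply]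
        abel
    · rintro ⟨w, hw, rfl⟩
      rw [hinner w, hw]
end
end

section
/- Fix ρ ∈ 𝒞 and P ∈ 𝒫^ρ_d. Then for every α ∈ (0,1), the level-α depth region {z ∈ ℝ^d : MD^ρ(z,P) ≥ α} coincides with the order-α M-quantile region R^ρ_α(P). -/
open MeasureTheory Set Filter
open scoped RealInnerProductSpace ENNReal

noncomputable section

section MDepthAuxSection
open scoped Topology

namespace MDepthAux

variable {ρ ψ : ℝ → ℝ} {Q : Measure ℝ}

/-! ### Properties of the left derivative of a convex loss -/

lemma psi_le_secant (hρ : ConvexOn ℝ Set.univ ρ)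
    (hψ : ∀ x : ℝ, HasDerivWithinAt ρ (ψ x) (Set.Iio x) x)
    {x y : ℝ} (hxy : x < y) : ψ x ≤ (ρ y - ρ x) / (y - x) := by
  have h := (hasDerivWithinAt_iff_tendsto_slope).1 (hψ x)
  rw [Set.diff_singleton_eq_self (by simp)] at h
  have hne : (𝓝[Set.Iio x] x).NeBot := nhdsLT_neBot x
  refine le_of_tendsto h ?_
  filter_upwards [self_mem_nhdsWithin] with s hs
  have hsx : s < x := hs
  rw [slope_def_field]
  exact hρ.secant_mono (Set.mem_univ x) (Set.mem_univ s) (Set.mem_univ y)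
      (ne_of_lt hsx) (ne_of_gt hxy) (le_of_lt (lt_trans hsx hxy))

lemma secant_le_psi (hρ : ConvexOn ℝ Set.univ ρ)
    (hψ : ∀ x : ℝ, HasDerivWithinAt ρ (ψ x) (Set.Iio x) x)
    {x y : ℝ} (hxy : x < y) : (ρ y - ρ x) / (y - x) ≤ ψ y := by
  have h := (hasDerivWithinAt_iff_tendsto_slope).1 (hψ y)
  rw [Set.diff_singleton_eq_self (by simp)] at h
  have hne : (𝓝[Set.Iio y] y).NeBot := nhdsLT_neBot y
  refine ge_of_tendsto h ?_
  have hmem : Set.Ioo x y ∈ 𝓝[Set.Iio y] y := by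
    rw [mem_nhdsWithin_iff_exists_mem_nhds_inter]
    exact ⟨Set.Ioi x, Ioi_mem_nhds hxy, by rw [Set.inter_comm, Set.Iio_inter_Ioi]⟩
  filter_upwards [hmem] with s hs
  rw [slope_def_field]
  have h1 : (ρ x - ρ y) / (x - y) ≤ (ρ s - ρ y) / (s - y) :=
    hρ.secant_mono (Set.mem_univ y) (Set.mem_univ x) (Set.mem_univ s)
      (ne_of_lt hxy) (ne_of_lt hs.2) (le_of_lt hs.1)
  calc (ρ y - ρ x) / (y - x) = (ρ x - ρ y) / (x - y) := by
        rw [div_eq_div_iff (by linarith) (by linarith)]; ring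
  _ ≤ (ρ s - ρ y) / (s - y) := h1

lemma psi_mono (hρ : ConvexOn ℝ Set.univ ρ)
    (hψ : ∀ x : ℝ, HasDerivWithinAt ρ (ψ x) (Set.Iio x) x) : Monotone ψ := by
  intro a b hab
  rcases eq_or_lt_of_le hab with rfl | h
  · exact le_rfl
  · exact le_trans (psi_le_secant hρ hψ h) (secant_le_psi hρ hψ h)

lemma psi_zero_nonpos (hρ : ConvexOn ℝ Set.univ ρ) (hnn : ∀ t, 0 ≤ ρ t)
    (hz : ρ 0 = 0)
    (hψ : ∀ x : ℝ, HasDerivWithinAt ρ (ψ x) (Set.Iio x) x) : ψ 0 ≤ 0 := by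
  have h := (hasDerivWithinAt_iff_tendsto_slope).1 (hψ 0)
  rw [Set.diff_singleton_eq_self (by simp)] at h
  have hne : (𝓝[Set.Iio (0:ℝ)] 0).NeBot := nhdsLT_neBot 0
  refine le_of_tendsto h ?_
  filter_upwards [self_mem_nhdsWithin] with s hs
  have hs0 : s < 0 := hs
  rw [slope_def_field, hz]
  rw [sub_zero, sub_zero]
  exact div_nonpos_of_nonneg_of_nonpos (hnn s) (le_of_lt hs0)

lemma psi_neg (hρ : ConvexOn ℝ Set.univ ρ) (hnn : ∀ t, 0 ≤ ρ t)
    (hz : ∀ t, ρ t = 0 ↔ t = 0)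
    (hψ : ∀ x : ℝ, HasDerivWithinAt ρ (ψ x) (Set.Iio x) x)
    {t : ℝ} (ht : t < 0) : ψ t < 0 := by
  have h1 : ψ t ≤ (ρ 0 - ρ t) / (0 - t) := psi_le_secant hρ hψ ht
  have hρ0 : ρ 0 = 0 := (hz 0).mpr rfl
  have hρt : 0 < ρ t := lt_of_le_of_ne (hnn t) fun h => (ne_of_lt ht) ((hz t).1 h.symm)
  have : (ρ 0 - ρ t) / (0 - t) = ρ t / t := by
    rw [hρ0]; rw [zero_sub, zero_sub, neg_div_neg_eq]
  rw [this] at h1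
  exact lt_of_le_of_lt h1 (div_neg_of_pos_of_neg hρt ht)

lemma psi_pos (hρ : ConvexOn ℝ Set.univ ρ) (hnn : ∀ t, 0 ≤ ρ t)
    (hz : ∀ t, ρ t = 0 ↔ t = 0)
    (hψ : ∀ x : ℝ, HasDerivWithinAt ρ (ψ x) (Set.Iio x) x)
    {t : ℝ} (ht : 0 < t) : 0 < ψ t := by
  have h1 : (ρ t - ρ 0) / (t - 0) ≤ ψ t := secant_le_psi hρ hψ ht
  have hρ0 : ρ 0 = 0 := (hz 0).mpr rfl
  have hρt : 0 < ρ t := lt_of_le_of_ne (hnn t) fun h => (ne_of_gt ht) ((hz t).1 h.symm)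
  have : (ρ t - ρ 0) / (t - 0) = ρ t / t := by rw [hρ0, sub_zero, sub_zero]
  rw [this] at h1
  exact lt_of_lt_of_le (div_pos hρt ht) h1

/-! ### Integrands -/

def ff (ψ : ℝ → ℝ) (θ : ℝ) (y : ℝ) : ℝ := |ψ (y - θ)| * (if y ≤ θ then 1 else 0)
def gg (ψ : ℝ → ℝ) (θ : ℝ) (y : ℝ) : ℝ := |ψ (y - θ)| * (if y ≤ θ then 0 else 1)

lemma ff_nonneg (θ y : ℝ) : 0 ≤ ff ψ θ y := by unfold ff; positivity
lemma gg_nonneg (θ y : ℝ) : 0 ≤ gg ψ θ y := by unfold gg; positivity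

lemma ff_meas (hm : Monotone ψ) (θ : ℝ) : Measurable (ff ψ θ) :=
  ((hm.measurable.comp (measurable_id.sub_const θ)).abs).mul
    (Measurable.ite (measurableSet_le measurable_id measurable_const)
      measurable_const measurable_const)

lemma gg_meas (hm : Monotone ψ) (θ : ℝ) : Measurable (gg ψ θ) :=
  ((hm.measurable.comp (measurable_id.sub_const θ)).abs).mul
    (Measurable.ite (measurableSet_le measurable_id measurable_const)
      measurable_const measurable_const)

lemma ff_le_abs (θ y : ℝ) : ff ψ θ y ≤ |ψ (y - θ)| := by
  unfold ff
  rcases le_or_gt y θ with h | h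
  · simp [h]
  · simp [not_le.2 h, abs_nonneg]

lemma gg_le_abs (θ y : ℝ) : gg ψ θ y ≤ |ψ (y - θ)| := by
  unfold gg
  rcases le_or_gt y θ with h | h
  · simp [h, abs_nonneg]
  · simp [not_le.2 h]

lemma ff_integrable (hm : Monotone ψ) (θ : ℝ)
    (hInt : Integrable (fun t => |ψ (t - θ)|) Q) :
    Integrable (ff ψ θ) Q := by
  refine hInt.mono' ((ff_meas hm θ).aestronglyMeasurable) ?_
  filter_upwards with y
  rw [Real.norm_eq_abs, abs_of_nonneg (ff_nonneg θ y)]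
  exact ff_le_abs θ y

lemma gg_integrable (hm : Monotone ψ) (θ : ℝ)
    (hInt : Integrable (fun t => |ψ (t - θ)|) Q) :
    Integrable (gg ψ θ) Q := by
  refine hInt.mono' ((gg_meas hm θ).aestronglyMeasurable) ?_
  filter_upwards with y
  rw [Real.norm_eq_abs, abs_of_nonneg (gg_nonneg θ y)]
  exact gg_le_abs θ y

lemma ff_add_gg (θ y : ℝ) : ff ψ θ y + gg ψ θ y = |ψ (y - θ)| := by
  unfold ff gg
  rcases le_or_gt y θ with h | h <;> simp [h, not_le.2]

lemma ff_mono (hm : Monotone ψ) (h0 : ψ 0 ≤ 0) {θ θ' : ℝ} (hθ : θ ≤ θ') (y : ℝ) :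
    ff ψ θ y ≤ ff ψ θ' y := by
  unfold ff
  rcases le_or_gt y θ with h | h
  · have h' : y ≤ θ' := h.trans hθ
    simp only [h, h', if_true, mul_one]
    have h1 : ψ (y - θ') ≤ ψ (y - θ) := hm (by linarith)
    have h2 : ψ (y - θ) ≤ ψ 0 := hm (by linarith)
    rw [abs_of_nonpos (by linarith), abs_of_nonpos (by linarith)]
    linarith
  · simp only [not_le.2 h, if_false, mul_zero]
    positivity

lemma gg_anti (hm : Monotone ψ) (hpos : ∀ t, 0 < t → 0 < ψ t)
    {θ θ' : ℝ} (hθ : θ ≤ θ') (y : ℝ) : gg ψ θ' y ≤ gg ψ θ y := by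
  unfold gg
  rcases le_or_gt y θ' with h | h
  · simp only [h, if_true, mul_zero]
    positivity
  · have h' : θ < y := lt_of_le_of_lt hθ h
    simp only [not_le.2 h, not_le.2 h', if_false, mul_one]
    have p1 : 0 < ψ (y - θ') := hpos _ (by linarith)
    have p2 : 0 < ψ (y - θ) := hpos _ (by linarith)
    rw [abs_of_pos p1, abs_of_pos p2]
    exact hm (by linarith)


/-! ### Integral lemmas -/

variable [IsProbabilityMeasure Q]

lemma D_pos (hm : Monotone ψ) (hneg : ∀ t, t < 0 → ψ t < 0) (hpos : ∀ t, 0 < t → 0 < ψ t)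
    (θ : ℝ) (hInt : Integrable (fun t => |ψ (t - θ)|) Q) (hQ : Q {θ} < 1) :
    0 < ∫ y, |ψ (y - θ)| ∂Q := by
  rw [integral_pos_iff_support_of_nonneg (fun y => abs_nonneg _) hInt]
  have hsub : {θ}ᶜ ⊆ Function.support fun y => |ψ (y - θ)| := by
    intro y hy
    simp only [Function.mem_support, ne_eq, abs_eq_zero]
    rcases lt_or_gt_of_ne (fun h : y = θ => hy h) with h | h
    · exact ne_of_lt (hneg _ (by linarith))
    · exact ne_of_gt (hpos _ (by linarith))
  refine lt_of_lt_of_le ?_ (measure_mono hsub)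
  rw [prob_compl_eq_one_sub (measurableSet_singleton θ)]
  exact tsub_pos_iff_lt.2 hQ

lemma n_pos (hm : Monotone ψ) (hneg : ∀ t, t < 0 → ψ t < 0)
    (θ : ℝ) (hInt : Integrable (fun t => |ψ (t - θ)|) Q) (hQ : Q (Set.Iio θ) ≠ 0) :
    0 < ∫ y, ff ψ θ y ∂Q := by
  rw [integral_pos_iff_support_of_nonneg (ff_nonneg (ψ := ψ) θ) (ff_integrable hm θ hInt)]
  have hsub : Set.Iio θ ⊆ Function.support (ff ψ θ) := by
    intro y hy
    have hy' : y < θ := hy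
    simp only [Function.mem_support, ff, ne_eq, if_pos (le_of_lt hy'), mul_one, abs_eq_zero]
    exact ne_of_lt (hneg _ (by linarith))
  exact lt_of_lt_of_le (pos_iff_ne_zero.2 hQ) (measure_mono hsub)

lemma p_pos (hm : Monotone ψ) (hpos : ∀ t, 0 < t → 0 < ψ t)
    (θ : ℝ) (hInt : Integrable (fun t => |ψ (t - θ)|) Q) (hQ : Q (Set.Ioi θ) ≠ 0) :
    0 < ∫ y, gg ψ θ y ∂Q := by
  rw [integral_pos_iff_support_of_nonneg (gg_nonneg (ψ := ψ) θ) (gg_integrable hm θ hInt)]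
  have hsub : Set.Ioi θ ⊆ Function.support (gg ψ θ) := by
    intro y hy
    have hy' : θ < y := hy
    simp only [Function.mem_support, gg, ne_eq, if_neg (not_le.2 hy'), mul_one, abs_eq_zero]
    exact ne_of_gt (hpos _ (by linarith))
  exact lt_of_lt_of_le (pos_iff_ne_zero.2 hQ) (measure_mono hsub)

lemma exists_Iio_pos : ∃ θ : ℝ, Q (Set.Iio θ) ≠ 0 := by
  by_contra h
  push_neg at h
  have huniv : (Set.univ : Set ℝ) = ⋃ k : ℕ, Set.Iio (k : ℝ) := by
    ext y
    simp only [Set.mem_univ, Set.mem_iUnion, Set.mem_Iio, true_iff]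
    exact exists_nat_gt y
  have h1 : Q Set.univ ≤ ∑' k : ℕ, Q (Set.Iio (k : ℝ)) := huniv ▸ measure_iUnion_le _
  simp only [h, tsum_zero, nonpos_iff_eq_zero] at h1
  simpa [h1] using (measure_univ (μ := Q))

lemma exists_Ioi_pos : ∃ θ : ℝ, Q (Set.Ioi θ) ≠ 0 := by
  by_contra h
  push_neg at h
  have huniv : (Set.univ : Set ℝ) = ⋃ k : ℕ, Set.Ioi (-(k : ℝ)) := by
    ext y
    simp only [Set.mem_univ, Set.mem_iUnion, Set.mem_Ioi, true_iff]
    obtain ⟨k, hk⟩ := exists_nat_gt (-y)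
    exact ⟨k, by linarith⟩
  have h1 : Q Set.univ ≤ ∑' k : ℕ, Q (Set.Ioi (-(k : ℝ))) := huniv ▸ measure_iUnion_le _
  simp only [h, tsum_zero, nonpos_iff_eq_zero] at h1
  simpa [h1] using (measure_univ (μ := Q))

lemma p_tendsto (hm : Monotone ψ) (hpos : ∀ t, 0 < t → 0 < ψ t)
    (hInt : ∀ θ : ℝ, Integrable (fun t => |ψ (t - θ)|) Q) :
    Tendsto (fun θ => ∫ y, gg ψ θ y ∂Q) atTop (𝓝 0) := by
  have h0 : (0 : ℝ) = ∫ (_ : ℝ), (0 : ℝ) ∂Q := by simp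
  rw [h0]
  refine tendsto_integral_filter_of_dominated_convergence (fun y => |ψ (y - 0)|)
    (Eventually.of_forall fun θ => (gg_meas hm θ).aestronglyMeasurable) ?_ (hInt 0) ?_
  · filter_upwards [eventually_ge_atTop (0 : ℝ)] with θ hθ
    filter_upwards with y
    rw [Real.norm_eq_abs, abs_of_nonneg (gg_nonneg θ y)]
    unfold gg
    rcases le_or_gt y θ with h | h
    · simp only [h, if_true, mul_zero]
      positivity
    · simp only [not_le.2 h, if_false, mul_one]
      have p1 : 0 < ψ (y - θ) := hpos _ (by linarith)
      have p2 : 0 < ψ (y - 0) := hpos _ (by linarith)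
      rw [abs_of_pos p1, abs_of_pos p2]
      exact hm (by linarith)
  · filter_upwards with y
    refine Tendsto.congr' ?_ tendsto_const_nhds
    filter_upwards [eventually_ge_atTop y] with θ hθ
    simp [gg, hθ]

lemma n_tendsto (hm : Monotone ψ) (h0 : ψ 0 ≤ 0)
    (hInt : ∀ θ : ℝ, Integrable (fun t => |ψ (t - θ)|) Q) :
    Tendsto (fun θ => ∫ y, ff ψ θ y ∂Q) atBot (𝓝 0) := by
  have hz : (0 : ℝ) = ∫ (_ : ℝ), (0 : ℝ) ∂Q := by simp
  rw [hz]
  refine tendsto_integral_filter_of_dominated_convergence (fun y => |ψ (y - 0)|)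
    (Eventually.of_forall fun θ => (ff_meas hm θ).aestronglyMeasurable) ?_ (hInt 0) ?_
  · filter_upwards [eventually_le_atBot (0 : ℝ)] with θ hθ
    filter_upwards with y
    rw [Real.norm_eq_abs, abs_of_nonneg (ff_nonneg θ y)]
    unfold ff
    rcases le_or_gt y θ with h | h
    · simp only [h, if_true, mul_one]
      have p1 : ψ (y - θ) ≤ ψ 0 := hm (by linarith)
      have p2 : ψ (y - 0) ≤ ψ (y - θ) := hm (by linarith)
      rw [abs_of_nonpos (by linarith), abs_of_nonpos (by linarith)]
      linarith
    · simp only [not_le.2 h, if_false, mul_zero]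
      positivity
  · filter_upwards with y
    refine Tendsto.congr' ?_ tendsto_const_nhds
    filter_upwards [eventually_le_atBot (y - 1)] with θ hθ
    have hlt : θ < y := by linarith
    simp [ff, not_le.2 hlt]


/-! ### Gfun lemmas (Gfun duplicated here for scratch) -/


lemma Gfun_eq (θ : ℝ) : Gfun ψ Q θ = (∫ y, ff ψ θ y ∂Q) / ∫ y, |ψ (y - θ)| ∂Q := rfl

omit [IsProbabilityMeasure Q] in
lemma D_eq (hm : Monotone ψ) (θ : ℝ) (hInt : Integrable (fun t => |ψ (t - θ)|) Q) :
    ∫ y, |ψ (y - θ)| ∂Q = (∫ y, ff ψ θ y ∂Q) + ∫ y, gg ψ θ y ∂Q := by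
  have h : (fun y => |ψ (y - θ)|) = fun y => ff ψ θ y + gg ψ θ y :=
    funext fun y => (ff_add_gg θ y).symm
  rw [h, integral_add (ff_integrable hm θ hInt) (gg_integrable hm θ hInt)]

omit [IsProbabilityMeasure Q] in
lemma Gfun_nonneg (θ : ℝ) : 0 ≤ Gfun ψ Q θ :=
  div_nonneg (integral_nonneg (ff_nonneg θ)) (integral_nonneg fun y => abs_nonneg _)

lemma Gfun_mono (hm : Monotone ψ) (h0 : ψ 0 ≤ 0)
    (hneg : ∀ t, t < 0 → ψ t < 0) (hpos : ∀ t, 0 < t → 0 < ψ t)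
    (hInt : ∀ θ : ℝ, Integrable (fun t => |ψ (t - θ)|) Q)
    (hQ1 : ∀ c : ℝ, Q {c} < 1) : Monotone (Gfun ψ Q) := by
  intro θ θ' hθ
  have hD := D_pos hm hneg hpos θ (hInt θ) (hQ1 θ)
  have hD' := D_pos hm hneg hpos θ' (hInt θ') (hQ1 θ')
  rw [Gfun_eq, Gfun_eq, div_le_div_iff₀ hD hD', D_eq hm θ (hInt θ), D_eq hm θ' (hInt θ')]
  have hn : (∫ y, ff ψ θ y ∂Q) ≤ ∫ y, ff ψ θ' y ∂Q :=
    integral_mono (ff_integrable hm θ (hInt θ)) (ff_integrable hm θ' (hInt θ'))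
      (ff_mono hm h0 hθ)
  have hp : (∫ y, gg ψ θ' y ∂Q) ≤ ∫ y, gg ψ θ y ∂Q :=
    integral_mono (gg_integrable hm θ' (hInt θ')) (gg_integrable hm θ (hInt θ))
      (gg_anti hm hpos hθ)
  have hn0 : 0 ≤ ∫ y, ff ψ θ y ∂Q := integral_nonneg (ff_nonneg θ)
  have hp0 : 0 ≤ ∫ y, gg ψ θ' y ∂Q := integral_nonneg (gg_nonneg θ')
  nlinarith

lemma exists_Gfun_ge (hm : Monotone ψ) (h0 : ψ 0 ≤ 0)
    (hneg : ∀ t, t < 0 → ψ t < 0) (hpos : ∀ t, 0 < t → 0 < ψ t)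
    (hInt : ∀ θ : ℝ, Integrable (fun t => |ψ (t - θ)|) Q)
    (hQ1 : ∀ c : ℝ, Q {c} < 1) {β : ℝ} (hβ : β < 1) :
    ∃ θ : ℝ, β ≤ Gfun ψ Q θ := by
  rcases le_or_gt β 0 with hβ0 | hβ0
  · exact ⟨0, hβ0.trans (Gfun_nonneg 0)⟩
  obtain ⟨θ₀, hθ₀⟩ := exists_Iio_pos (Q := Q)
  set a := ∫ y, ff ψ θ₀ y ∂Q with ha
  have ha0 : 0 < a := n_pos hm hneg θ₀ (hInt θ₀) hθ₀
  set ε := a * (1 - β) / β with hε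
  have hε0 : 0 < ε := by
    apply div_pos (mul_pos ha0 (by linarith)) hβ0
  have hev : ∀ᶠ θ in atTop, (∫ y, gg ψ θ y ∂Q) < ε :=
    (p_tendsto hm hpos hInt).eventually_lt_const hε0
  obtain ⟨θ, hθε, hθ₀θ⟩ := (hev.and (eventually_ge_atTop θ₀)).exists
  refine ⟨θ, ?_⟩
  have hD := D_pos hm hneg hpos θ (hInt θ) (hQ1 θ)
  rw [Gfun_eq, le_div_iff₀ hD, D_eq hm θ (hInt θ)]
  have hn : a ≤ ∫ y, ff ψ θ y ∂Q :=
    integral_mono (ff_integrable hm θ₀ (hInt θ₀)) (ff_integrable hm θ (hInt θ))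
      (ff_mono hm h0 hθ₀θ)
  have hp0 : 0 ≤ ∫ y, gg ψ θ y ∂Q := integral_nonneg (gg_nonneg θ)
  have hkey : β * ε = a * (1 - β) := by
    rw [hε]; field_simp
  nlinarith [hθε]

lemma exists_Gfun_lt (hm : Monotone ψ) (h0 : ψ 0 ≤ 0)
    (hneg : ∀ t, t < 0 → ψ t < 0) (hpos : ∀ t, 0 < t → 0 < ψ t)
    (hInt : ∀ θ : ℝ, Integrable (fun t => |ψ (t - θ)|) Q)
    (hQ1 : ∀ c : ℝ, Q {c} < 1) {α : ℝ} (hα0 : 0 < α) (hα1 : α < 1) :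
    ∃ θ : ℝ, Gfun ψ Q θ < α := by
  obtain ⟨θ₁, hθ₁⟩ := exists_Ioi_pos (Q := Q)
  set b := ∫ y, gg ψ θ₁ y ∂Q with hb
  have hb0 : 0 < b := p_pos hm hpos θ₁ (hInt θ₁) hθ₁
  set ε := α * b / (1 - α) with hε
  have hε0 : 0 < ε := div_pos (mul_pos hα0 hb0) (by linarith)
  have hev : ∀ᶠ θ in atBot, (∫ y, ff ψ θ y ∂Q) < ε :=
    (n_tendsto hm h0 hInt).eventually_lt_const hε0
  obtain ⟨θ, hθε, hθθ₁⟩ := (hev.and (eventually_le_atBot θ₁)).exists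
  refine ⟨θ, ?_⟩
  have hD := D_pos hm hneg hpos θ (hInt θ) (hQ1 θ)
  rw [Gfun_eq, div_lt_iff₀ hD, D_eq hm θ (hInt θ)]
  have hp : b ≤ ∫ y, gg ψ θ y ∂Q :=
    integral_mono (gg_integrable hm θ₁ (hInt θ₁)) (gg_integrable hm θ (hInt θ))
      (gg_anti hm hpos hθθ₁)
  have hn0 : 0 ≤ ∫ y, ff ψ θ y ∂Q := integral_nonneg (ff_nonneg θ)
  have hkey : (1 - α) * ε = α * b := by
    rw [hε, mul_div_assoc']
    exact mul_div_cancel_left₀ _ (by linarith)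
  nlinarith [hθε]

end MDepthAux

end MDepthAuxSection

theorem stmt_7 {d : ℕ} (hd : 0 < d) (ρ ψ : ℝ → ℝ) (hρ : LossClass ρ)
    (hψ : IsLeftDeriv ρ ψ)
    (P : Measure (EuclideanSpace ℝ (Fin d))) [IsProbabilityMeasure P]
    (hP1 : ∀ u : EuclideanSpace ℝ (Fin d), ‖u‖ = 1 → ∀ c : ℝ, P {z | ⟪u, z⟫ = c} < 1)
    (hP2 : ∀ u : EuclideanSpace ℝ (Fin d), ‖u‖ = 1 → ∀ θ : ℝ,
      Integrable (fun t => |ψ (t - θ)|) (dirProj P u))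
    (α : ℝ) (hα : α ∈ Set.Ioo (0 : ℝ) 1) :
    {z : EuclideanSpace ℝ (Fin d) | α ≤ MDepth ψ P z} = MRegion ψ P α := by
  obtain ⟨hconv, hnn, heven, hzero⟩ := hρ
  have hm : Monotone ψ := MDepthAux.psi_mono hconv hψ
  have h0 : ψ 0 ≤ 0 := MDepthAux.psi_zero_nonpos hconv hnn ((hzero 0).mpr rfl) hψ
  have hneg : ∀ t, t < 0 → ψ t < 0 := fun t ht => MDepthAux.psi_neg hconv hnn hzero hψ ht
  have hpos : ∀ t, 0 < t → 0 < ψ t := fun t ht => MDepthAux.psi_pos hconv hnn hzero hψ ht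
  have hmemR : ∀ (β : ℝ) (z : EuclideanSpace ℝ (Fin d)), z ∈ MRegion ψ P β ↔
      ∀ u : EuclideanSpace ℝ (Fin d), ‖u‖ = 1 → MQuant ψ (dirProj P u) β ≤ ⟪u, z⟫ := by
    intro β z
    simp [MRegion, MHalf, Set.mem_iInter]
  have hproj : ∀ u : EuclideanSpace ℝ (Fin d),
      Measurable fun z : EuclideanSpace ℝ (Fin d) => ⟪u, z⟫ :=
    fun u => (continuous_const.inner continuous_id).measurable
  have hQprob : ∀ u : EuclideanSpace ℝ (Fin d), IsProbabilityMeasure (dirProj P u) :=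
    fun u => Measure.isProbabilityMeasure_map (hproj u).aemeasurable
  have hQ1 : ∀ u : EuclideanSpace ℝ (Fin d), ‖u‖ = 1 → ∀ c : ℝ, dirProj P u {c} < 1 := by
    intro u hu c
    rw [dirProj, Measure.map_apply (hproj u) (measurableSet_singleton c)]
    have hpre : (fun z : EuclideanSpace ℝ (Fin d) => ⟪u, z⟫) ⁻¹' {c}
        = {z : EuclideanSpace ℝ (Fin d) | ⟪u, z⟫ = c} := by
      ext z; simp
    rw [hpre]
    exact hP1 u hu c
  ext z
  simp only [Set.mem_setOf_eq]
  constructor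
  · intro hz
    rw [hmemR]
    intro u hu
    haveI := hQprob u
    set Q := dirProj P u with hQdef
    set c := (⟪u, z⟫ : ℝ) with hc
    set S := {β : ℝ | β ∈ Set.Ioo (0:ℝ) 1 ∧ z ∈ MRegion ψ P β} with hSdef
    have hzS : MDepth ψ P z = sSup S := rfl
    have hSne : S.Nonempty := by
      by_contra h
      rw [Set.not_nonempty_iff_eq_empty] at h
      rw [hzS, h, Real.sSup_empty] at hz
      exact absurd (lt_of_lt_of_le hα.1 hz) (lt_irrefl 0)
    have claim : ∀ c' : ℝ, c < c' → ∃ t : ℝ, t ≤ c' ∧ α ≤ Gfun ψ Q t := by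
      intro c' hc'
      by_contra h
      push_neg at h
      have hGc' : Gfun ψ Q c' < α := h c' le_rfl
      have hlt : Gfun ψ Q c' < sSup S := by
        rw [← hzS]; exact lt_of_lt_of_le hGc' hz
      obtain ⟨β, hβS, hβ⟩ := exists_lt_of_lt_csSup hSne hlt
      have hMQ : MQuant ψ Q β ≤ c := (hmemR β z).1 hβS.2 u hu
      have hAne : {θ : ℝ | β ≤ Gfun ψ Q θ}.Nonempty :=
        MDepthAux.exists_Gfun_ge hm h0 hneg hpos (hP2 u hu) (hQ1 u hu) hβS.1.2
      have hsub : ∀ t ∈ {θ : ℝ | β ≤ Gfun ψ Q θ}, c' ≤ t := by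
        intro t ht
        by_contra hts
        push_neg at hts
        have hmon := MDepthAux.Gfun_mono hm h0 hneg hpos (hP2 u hu) (hQ1 u hu) (le_of_lt hts)
        have hb : β ≤ Gfun ψ Q t := ht
        linarith
      have hfin : c' ≤ MQuant ψ Q β := le_csInf hAne hsub
      rw [MQuant] at hfin
      rw [MQuant] at hMQ
      linarith
    obtain ⟨θ₁, hθ₁⟩ :=
      MDepthAux.exists_Gfun_lt hm h0 hneg hpos (hP2 u hu) (hQ1 u hu) hα.1 hα.2
    have hbdd : BddBelow {θ : ℝ | α ≤ Gfun ψ Q θ} := by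
      refine ⟨θ₁, fun t ht => ?_⟩
      by_contra hts
      push_neg at hts
      have hmon := MDepthAux.Gfun_mono hm h0 hneg hpos (hP2 u hu) (hQ1 u hu) (le_of_lt hts)
      have hb : α ≤ Gfun ψ Q t := ht
      linarith
    show MQuant ψ Q α ≤ c
    by_contra hcon
    push_neg at hcon
    obtain ⟨t, htc, htG⟩ := claim ((c + MQuant ψ Q α)/2) (by linarith)
    have hle : MQuant ψ Q α ≤ t := csInf_le hbdd htG
    linarith
  · intro hz
    have hb : BddAbove {β : ℝ | β ∈ Set.Ioo (0:ℝ) 1 ∧ z ∈ MRegion ψ P β} :=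
      ⟨1, fun β hβ => le_of_lt hβ.1.2⟩
    exact le_csSup hb ⟨hα, hz⟩
end
end

section
/- Fix ρ ∈ 𝒞 and P ∈ 𝒫^ρ_d. Then there exists z_* ∈ ℝ^d such that MD^ρ(z_*,P) = sup_{z ∈ ℝ^d} MD^ρ(z,P), i.e. the halfspace M-depth attains its supremum. -/
open MeasureTheory Set Filter
open scoped RealInnerProductSpace ENNReal

noncomputable section

section Psi

variable {ρ ψ : ℝ → ℝ}

lemma psi_le_of_slope_le (hψ : IsLeftDeriv ρ ψ) {x c : ℝ}
    (h : ∀ t, t < x → slope ρ x t ≤ c) : ψ x ≤ c := by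
  have h' := (hasDerivWithinAt_iff_tendsto_slope' (notMem_Iio_self)).mp (hψ x)
  refine le_of_tendsto h' ?_
  filter_upwards [self_mem_nhdsWithin] with t ht
  exact h t ht

lemma psi_le_slope (hρ : LossClass ρ) (hψ : IsLeftDeriv ρ ψ) {x y : ℝ} (hxy : x < y) :
    ψ x ≤ (ρ y - ρ x) / (y - x) := by
  apply psi_le_of_slope_le hψ
  intro t ht
  rw [slope_def_field]
  exact hρ.1.secant_mono (mem_univ x) (mem_univ t) (mem_univ y) ht.ne hxy.ne'
    (ht.le.trans hxy.le)

lemma slope_le_psi (hρ : LossClass ρ) (hψ : IsLeftDeriv ρ ψ) {x y : ℝ} (hxy : x < y) :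
    (ρ y - ρ x) / (y - x) ≤ ψ y := by
  have := hρ.1.slope_le_of_hasDerivWithinAt_Iio (mem_univ x) (mem_univ y) hxy (hψ y)
  rwa [slope_def_field] at this

lemma psi_mono (hρ : LossClass ρ) (hψ : IsLeftDeriv ρ ψ) : Monotone ψ := by
  intro x y hxy
  rcases eq_or_lt_of_le hxy with rfl | h
  · exact le_rfl
  · exact (psi_le_slope hρ hψ h).trans (slope_le_psi hρ hψ h)

lemma rho_zero (hρ : LossClass ρ) : ρ 0 = 0 := (hρ.2.2.2 0).2 rfl

lemma rho_pos (hρ : LossClass ρ) {t : ℝ} (ht : t ≠ 0) : 0 < ρ t :=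
  (hρ.2.1 t).lt_of_ne (fun h => ht ((hρ.2.2.2 t).1 h.symm))

lemma psi_neg (hρ : LossClass ρ) (hψ : IsLeftDeriv ρ ψ) {t : ℝ} (ht : t < 0) : ψ t < 0 := by
  have h := psi_le_slope hρ hψ ht
  rw [rho_zero hρ] at h
  refine h.trans_lt ?_
  apply div_neg_of_neg_of_pos <;> linarith [rho_pos hρ ht.ne]

lemma psi_nonpos (hρ : LossClass ρ) (hψ : IsLeftDeriv ρ ψ) {t : ℝ} (ht : t ≤ 0) : ψ t ≤ 0 := by
  rcases eq_or_lt_of_le ht with rfl | h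
  · apply psi_le_of_slope_le hψ
    intro s hs
    rw [slope_def_field, rho_zero hρ]
    rw [div_nonpos_iff]
    left
    constructor
    · linarith [hρ.2.1 s]
    · linarith
  · exact (psi_neg hρ hψ h).le

lemma psi_pos (hρ : LossClass ρ) (hψ : IsLeftDeriv ρ ψ) {t : ℝ} (ht : 0 < t) : 0 < ψ t := by
  have h := slope_le_psi hρ hψ ht
  rw [rho_zero hρ, sub_zero, sub_zero] at h
  exact (div_pos (rho_pos hρ ht.ne') ht).trans_le h

end Psi

section G

variable {ρ ψ : ℝ → ℝ} (hρ : LossClass ρ) (hψ : IsLeftDeriv ρ ψ)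
variable {Q : Measure ℝ} [IsProbabilityMeasure Q]
  (hint : ∀ θ : ℝ, Integrable (fun t => |ψ (t - θ)|) Q)

lemma abs_psi_anti (hρ : LossClass ρ) (hψ : IsLeftDeriv ρ ψ) {s t : ℝ} (hst : s ≤ t)
    (ht : t ≤ 0) : |ψ t| ≤ |ψ s| := by
  rw [abs_of_nonpos (psi_nonpos hρ hψ ht), abs_of_nonpos (psi_nonpos hρ hψ (hst.trans ht))]
  exact neg_le_neg (psi_mono hρ hψ hst)

lemma abs_psi_mono (hρ : LossClass ρ) (hψ : IsLeftDeriv ρ ψ) {s t : ℝ} (hs : 0 < s)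
    (hst : s ≤ t) : |ψ s| ≤ |ψ t| := by
  rw [abs_of_pos (psi_pos hρ hψ hs), abs_of_pos (psi_pos hρ hψ (hs.trans_le hst))]
  exact psi_mono hρ hψ hst

lemma Gfun_eq_s8 (ψ : ℝ → ℝ) (Q : Measure ℝ) (θ : ℝ) :
    Gfun ψ Q θ = (∫ y in Iic θ, |ψ (y - θ)| ∂Q) / ∫ y, |ψ (y - θ)| ∂Q := by
  unfold Gfun
  congr 1
  rw [← integral_indicator measurableSet_Iic]
  congr 1 with y
  by_cases h : y ≤ θ <;> simp [Set.indicator_apply, mem_Iic, h]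

lemma exists_m (Q : Measure ℝ) [IsProbabilityMeasure Q] :
    ∃ m : ℝ, (1/2 : ℝ) ≤ (Q (Iic m)).toReal := by
  have h := tendsto_measure_Iic_atTop (μ := Q)
  rw [measure_univ] at h
  have hev : ∀ᶠ m in (atTop : Filter ℝ), (1/2 : ℝ≥0∞) < Q (Iic m) :=
    h.eventually (lt_mem_nhds (by norm_num))
  obtain ⟨m, hm⟩ := hev.exists
  refine ⟨m, ?_⟩
  have h2 := ENNReal.toReal_mono (measure_ne_top Q _) hm.le
  simpa using h2

lemma exists_M (Q : Measure ℝ) [IsProbabilityMeasure Q] :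
    ∃ M : ℝ, (1/2 : ℝ) ≤ (Q (Ici M)).toReal := by
  have h := tendsto_measure_Ici_atBot (μ := Q)
  rw [measure_univ] at h
  have hev : ∀ᶠ m in (atBot : Filter ℝ), (1/2 : ℝ≥0∞) < Q (Ici m) :=
    h.eventually (lt_mem_nhds (by norm_num))
  obtain ⟨m, hm⟩ := hev.exists
  refine ⟨m, ?_⟩
  have h2 := ENNReal.toReal_mono (measure_ne_top Q _) hm.le
  simpa using h2

include hρ hψ hint in
lemma denom_ge_of_ge {m θ : ℝ} (hθ : m + 1 ≤ θ) :
    |ψ (-1)| * (Q (Iic m)).toReal ≤ ∫ y, |ψ (y - θ)| ∂Q := by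
  have h0 : ∫ y in Iic m, (|ψ (-1)| : ℝ) ∂Q = (Q (Iic m)).toReal * |ψ (-1)| := by
    rw [setIntegral_const]; rw [smul_eq_mul]; rfl
  have h1 : ∫ y in Iic m, (|ψ (-1)| : ℝ) ∂Q ≤ ∫ y in Iic m, |ψ (y - θ)| ∂Q := by
    refine setIntegral_mono_on (integrableOn_const (measure_ne_top _ _))
      ((hint θ).integrableOn) measurableSet_Iic ?_
    intro y hy
    exact abs_psi_anti hρ hψ (by simp at hy; linarith) (by norm_num)
  have h2 : ∫ y in Iic m, |ψ (y - θ)| ∂Q ≤ ∫ y, |ψ (y - θ)| ∂Q :=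
    setIntegral_le_integral (hint θ) (ae_of_all _ fun y => abs_nonneg _)
  calc |ψ (-1)| * (Q (Iic m)).toReal = ∫ y in Iic m, (|ψ (-1)| : ℝ) ∂Q := by rw [h0, mul_comm]
    _ ≤ _ := h1.trans h2

include hρ hψ hint in
lemma denom_ge_of_le {M θ : ℝ} (hθ : θ ≤ M - 1) :
    |ψ 1| * (Q (Ici M)).toReal ≤ ∫ y, |ψ (y - θ)| ∂Q := by
  have h0 : ∫ y in Ici M, (|ψ 1| : ℝ) ∂Q = (Q (Ici M)).toReal * |ψ 1| := by
    rw [setIntegral_const]; rw [smul_eq_mul]; rfl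
  have h1 : ∫ y in Ici M, (|ψ 1| : ℝ) ∂Q ≤ ∫ y in Ici M, |ψ (y - θ)| ∂Q := by
    refine setIntegral_mono_on (integrableOn_const (measure_ne_top _ _))
      ((hint θ).integrableOn) measurableSet_Ici ?_
    intro y hy
    exact abs_psi_mono hρ hψ one_pos (by simp at hy; linarith)
  have h2 : ∫ y in Ici M, |ψ (y - θ)| ∂Q ≤ ∫ y, |ψ (y - θ)| ∂Q :=
    setIntegral_le_integral (hint θ) (ae_of_all _ fun y => abs_nonneg _)
  calc |ψ 1| * (Q (Ici M)).toReal = ∫ y in Ici M, (|ψ 1| : ℝ) ∂Q := by rw [h0, mul_comm]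
    _ ≤ _ := h1.trans h2

lemma tail_small_top {g : ℝ → ℝ} (hg : Integrable g Q) (hg0 : ∀ y, 0 ≤ g y) {ε : ℝ}
    (hε : 0 < ε) : ∃ T : ℝ, ∀ θ, T ≤ θ → ∫ y in Ioi θ, g y ∂Q ≤ ε := by
  have htendsto := tendsto_setIntegral_of_monotone (μ := Q) (s := fun θ : ℝ => Iic θ)
    (fun _ => measurableSet_Iic) monotone_Iic (by rw [iUnion_Iic]; exact hg.integrableOn)
  rw [iUnion_Iic, setIntegral_univ] at htendsto
  have hev : ∀ᶠ θ in (atTop : Filter ℝ), (∫ y, g y ∂Q) - ε < ∫ y in Iic θ, g y ∂Q :=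
    htendsto.eventually (lt_mem_nhds (by linarith))
  obtain ⟨T, hT⟩ := hev.exists
  refine ⟨T, fun θ hθ => ?_⟩
  have hsplit : (∫ y in Iic θ, g y ∂Q) + ∫ y in Ioi θ, g y ∂Q = ∫ y, g y ∂Q := by
    rw [← compl_Iic]; exact integral_add_compl measurableSet_Iic hg
  have hmono : ∫ y in Iic T, g y ∂Q ≤ ∫ y in Iic θ, g y ∂Q :=
    setIntegral_mono_set hg.integrableOn (ae_of_all _ hg0) (Iic_subset_Iic.2 hθ).eventuallyLE
  linarith

lemma tail_small_bot {g : ℝ → ℝ} (hg : Integrable g Q) (hg0 : ∀ y, 0 ≤ g y) {ε : ℝ}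
    (hε : 0 < ε) : ∃ T : ℝ, ∀ θ, θ ≤ T → ∫ y in Iic θ, g y ∂Q ≤ ε := by
  have htendsto := tendsto_setIntegral_of_monotone (μ := Q) (s := fun θ : ℝ => Ici (-θ))
    (fun _ => measurableSet_Ici) (fun a b hab => Ici_subset_Ici.2 (neg_le_neg hab))
    (by
      have : (⋃ θ : ℝ, Ici (-θ)) = univ :=
        eq_univ_of_forall fun x => mem_iUnion.2 ⟨-x, by simp⟩
      rw [this]; exact hg.integrableOn)
  have huniv : (⋃ θ : ℝ, Ici (-θ)) = univ :=
    eq_univ_of_forall fun x => mem_iUnion.2 ⟨-x, by simp⟩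
  rw [huniv, setIntegral_univ] at htendsto
  have hev : ∀ᶠ θ in (atTop : Filter ℝ), (∫ y, g y ∂Q) - ε < ∫ y in Ici (-θ), g y ∂Q :=
    htendsto.eventually (lt_mem_nhds (by linarith))
  obtain ⟨T₀, hT₀⟩ := hev.exists
  refine ⟨-T₀ - 1, fun θ hθ => ?_⟩
  have hsplit : (∫ y in Ici (-T₀), g y ∂Q) + ∫ y in Iio (-T₀), g y ∂Q = ∫ y, g y ∂Q := by
    rw [← compl_Ici]; exact integral_add_compl measurableSet_Ici hg
  have hmono : ∫ y in Iic θ, g y ∂Q ≤ ∫ y in Iio (-T₀), g y ∂Q :=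
    setIntegral_mono_set hg.integrableOn (ae_of_all _ hg0)
      (Iic_subset_Iio.2 (by linarith)).eventuallyLE
  linarith

include hρ hψ hint in
lemma exists_Gfun_ge {α : ℝ} (hα1 : α < 1) : ∃ θ : ℝ, α ≤ Gfun ψ Q θ := by
  obtain ⟨m, hm⟩ := exists_m Q
  set c₁ := |ψ (-1)| * (Q (Iic m)).toReal with hc₁def
  have hc₁ : 0 < c₁ := mul_pos (abs_pos.2 (psi_neg hρ hψ (by norm_num)).ne) (by linarith)
  obtain ⟨T, hT⟩ := tail_small_top (Q := Q) (hint (m + 1)) (fun y => abs_nonneg _)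
    (mul_pos (by linarith : (0:ℝ) < 1 - α) hc₁)
  set θ := max (m + 1) T with hθdef
  have hden : c₁ ≤ ∫ y, |ψ (y - θ)| ∂Q := denom_ge_of_ge hρ hψ hint (le_max_left _ _)
  have hdenpos : (0:ℝ) < ∫ y, |ψ (y - θ)| ∂Q := hc₁.trans_le hden
  have htail1 : ∫ y in Ioi θ, |ψ (y - θ)| ∂Q ≤ ∫ y in Ioi θ, |ψ (y - (m + 1))| ∂Q := by
    refine setIntegral_mono_on ((hint θ).integrableOn) ((hint (m+1)).integrableOn)
      measurableSet_Ioi ?_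
    intro y hy
    simp only [mem_Ioi] at hy
    exact abs_psi_mono hρ hψ (by linarith) (by have := le_max_left (m+1) T; linarith)
  have htail2 : ∫ y in Ioi θ, |ψ (y - (m + 1))| ∂Q ≤ (1 - α) * c₁ := hT θ (le_max_right _ _)
  have hsplit : (∫ y in Iic θ, |ψ (y - θ)| ∂Q) + ∫ y in Ioi θ, |ψ (y - θ)| ∂Q
      = ∫ y, |ψ (y - θ)| ∂Q := by
    rw [← compl_Iic]; exact integral_add_compl measurableSet_Iic (hint θ)
  refine ⟨θ, ?_⟩
  rw [Gfun_eq_s8, le_div_iff₀ hdenpos]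
  have h5 : (1 - α) * c₁ ≤ (1 - α) * ∫ y, |ψ (y - θ)| ∂Q :=
    mul_le_mul_of_nonneg_left hden (by linarith)
  nlinarith [htail1.trans htail2]

include hρ hψ hint in
lemma exists_Gfun_lt {α : ℝ} (hα0 : 0 < α) : ∃ T : ℝ, ∀ θ, θ ≤ T → Gfun ψ Q θ < α := by
  obtain ⟨M, hM⟩ := exists_M Q
  set c₂ := |ψ 1| * (Q (Ici M)).toReal with hc₂def
  have hc₂ : 0 < c₂ := mul_pos (abs_pos.2 (psi_pos hρ hψ one_pos).ne') (by linarith)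
  obtain ⟨T₀, hT₀⟩ := tail_small_bot (Q := Q) (hint (M - 1)) (fun y => abs_nonneg _)
    (by positivity : (0:ℝ) < α * c₂ / 2)
  refine ⟨min (M - 1) T₀, fun θ hθ => ?_⟩
  have hθ1 : θ ≤ M - 1 := hθ.trans (min_le_left _ _)
  have hθ2 : θ ≤ T₀ := hθ.trans (min_le_right _ _)
  have hden : c₂ ≤ ∫ y, |ψ (y - θ)| ∂Q := denom_ge_of_le hρ hψ hint hθ1
  have hnum1 : ∫ y in Iic θ, |ψ (y - θ)| ∂Q ≤ ∫ y in Iic θ, |ψ (y - (M - 1))| ∂Q := by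
    refine setIntegral_mono_on ((hint θ).integrableOn) ((hint (M-1)).integrableOn)
      measurableSet_Iic ?_
    intro y hy
    simp only [mem_Iic] at hy
    exact abs_psi_anti hρ hψ (by linarith) (by linarith)
  have hnum2 : ∫ y in Iic θ, |ψ (y - (M - 1))| ∂Q ≤ α * c₂ / 2 := hT₀ θ hθ2
  have hnum0 : (0:ℝ) ≤ ∫ y in Iic θ, |ψ (y - θ)| ∂Q :=
    setIntegral_nonneg measurableSet_Iic fun y _ => abs_nonneg _
  rw [Gfun_eq_s8]
  have hdiv : (∫ y in Iic θ, |ψ (y - θ)| ∂Q) / (∫ y, |ψ (y - θ)| ∂Q) ≤ (α * c₂ / 2) / c₂ :=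
    div_le_div₀ (by positivity) (hnum1.trans hnum2) hc₂ hden
  have heq : (α * c₂ / 2) / c₂ = α / 2 := by field_simp
  rw [heq] at hdiv
  linarith

include hρ hψ hint in
lemma MQuant_mono {β γ : ℝ} (h0 : 0 < β) (hβγ : β ≤ γ) (h1 : γ < 1) :
    MQuant ψ Q β ≤ MQuant ψ Q γ := by
  obtain ⟨T, hT⟩ := exists_Gfun_lt hρ hψ hint h0
  apply csInf_le_csInf
  · exact ⟨T, fun x hx => le_of_not_gt fun h => absurd hx (not_le.2 (hT x h.le))⟩
  · obtain ⟨θ, hθ⟩ := exists_Gfun_ge hρ hψ hint h1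
    exact ⟨θ, hθ⟩
  · intro x hx
    exact le_trans hβγ hx

end G

theorem stmt_8 {d : ℕ} (hd : 0 < d) (ρ ψ : ℝ → ℝ) (hρ : LossClass ρ)
    (hψ : IsLeftDeriv ρ ψ)
    (P : Measure (EuclideanSpace ℝ (Fin d))) [IsProbabilityMeasure P]
    (hP1 : ∀ u : EuclideanSpace ℝ (Fin d), ‖u‖ = 1 → ∀ c : ℝ, P {z | ⟪u, z⟫ = c} < 1)
    (hP2 : ∀ u : EuclideanSpace ℝ (Fin d), ‖u‖ = 1 → ∀ θ : ℝ,
      Integrable (fun t => |ψ (t - θ)|) (dirProj P u)) :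
    ∃ zs : EuclideanSpace ℝ (Fin d),
      MDepth ψ P zs = ⨆ z : EuclideanSpace ℝ (Fin d), MDepth ψ P z := by
  classical
  set E := EuclideanSpace ℝ (Fin d)
  have hcont : ∀ u : E, Continuous fun z : E => ⟪u, z⟫ := fun u =>
    continuous_const.inner continuous_id
  have hprob : ∀ u : E, IsProbabilityMeasure (dirProj P u) := fun u =>
    Measure.isProbabilityMeasure_map (hcont u).measurable.aemeasurable
  -- monotonicity of quantiles
  have hquant : ∀ u : E, ‖u‖ = 1 → ∀ β γ : ℝ, 0 < β → β ≤ γ → γ < 1 →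
      MQuant ψ (dirProj P u) β ≤ MQuant ψ (dirProj P u) γ := by
    intro u hu β γ h1 h2 h3
    haveI := hprob u
    exact MQuant_mono hρ hψ (hP2 u hu) h1 h2 h3
  have hregion_anti : ∀ β γ : ℝ, 0 < β → β ≤ γ → γ < 1 →
      MRegion ψ P γ ⊆ MRegion ψ P β := by
    intro β γ h1 h2 h3 z hz
    refine Set.mem_iInter₂.2 fun u hu => ?_
    have hzu : MQuant ψ (dirProj P u) γ ≤ ⟪u, z⟫ := Set.mem_iInter₂.1 hz u hu
    exact le_trans (hquant u hu β γ h1 h2 h3) hzu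
  -- compactness of regions
  have hclosed : ∀ β : ℝ, IsClosed (MRegion ψ P β) := by
    intro β
    refine isClosed_biInter fun u hu => ?_
    exact isClosed_le continuous_const (hcont u)
  have hbox : ∀ β : ℝ, ∃ C : ℝ, ∀ z ∈ MRegion ψ P β, ‖z‖ ≤ C := by
    intro β
    set e : Fin d → E := fun i => EuclideanSpace.single i (1:ℝ) with he_def
    have he : ∀ i, ‖e i‖ = 1 := fun i => by
      rw [he_def]; rw [EuclideanSpace.norm_single]; exact norm_one
    have hne : ∀ i, ‖-e i‖ = 1 := fun i => by rw [norm_neg]; exact he i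
    set C : Fin d → ℝ := fun i =>
      max |MQuant ψ (dirProj P (e i)) β| |MQuant ψ (dirProj P (-e i)) β| with hC_def
    refine ⟨Real.sqrt (∑ i, C i ^ 2), ?_⟩
    intro z hz
    have hzi : ∀ i, |z i| ≤ C i := by
      intro i
      have h1 : MQuant ψ (dirProj P (e i)) β ≤ ⟪e i, z⟫ := Set.mem_iInter₂.1 hz (e i) (he i)
      have h2 : MQuant ψ (dirProj P (-e i)) β ≤ ⟪-e i, z⟫ :=
        Set.mem_iInter₂.1 hz (-e i) (hne i)
      have hip : ⟪e i, z⟫ = z i := by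
        rw [he_def]; rw [EuclideanSpace.inner_single_left]; simp
      rw [hip] at h1
      rw [inner_neg_left, hip] at h2
      rw [abs_le]
      constructor
      · have := neg_abs_le (MQuant ψ (dirProj P (e i)) β)
        have := le_max_left |MQuant ψ (dirProj P (e i)) β| |MQuant ψ (dirProj P (-e i)) β|
        simp only [hC_def]
        linarith
      · have := neg_abs_le (MQuant ψ (dirProj P (-e i)) β)
        have := le_max_right |MQuant ψ (dirProj P (e i)) β| |MQuant ψ (dirProj P (-e i)) β|
        simp only [hC_def]
        linarith
    rw [EuclideanSpace.norm_eq]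
    apply Real.sqrt_le_sqrt
    apply Finset.sum_le_sum
    intro i _
    rw [Real.norm_eq_abs]
    have h0 : (0:ℝ) ≤ |z i| := abs_nonneg _
    exact pow_le_pow_left₀ h0 (hzi i) 2
  have hcompact : ∀ β : ℝ, IsCompact (MRegion ψ P β) := by
    intro β
    obtain ⟨C, hC⟩ := hbox β
    exact Metric.isCompact_of_isClosed_isBounded (hclosed β)
      (isBounded_iff_forall_norm_le.2 ⟨C, hC⟩)
  -- depth basics
  have hD0 : ∀ z : E, 0 ≤ MDepth ψ P z := fun z =>
    Real.sSup_nonneg fun x hx => hx.1.1.le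
  have hD1 : ∀ z : E, MDepth ψ P z ≤ 1 := fun z =>
    Real.sSup_le (fun x hx => hx.1.2.le) zero_le_one
  have hbdd : BddAbove (Set.range (MDepth ψ P)) := by
    refine ⟨1, ?_⟩
    rintro _ ⟨z, rfl⟩
    exact hD1 z
  set A := ⨆ z : E, MDepth ψ P z with hA_def
  have hA1 : A ≤ 1 := ciSup_le hD1
  have hA0 : 0 ≤ A := (hD0 0).trans (le_ciSup hbdd 0)
  rcases eq_or_lt_of_le hA0 with h0 | hApos
  · exact ⟨0, le_antisymm (le_ciSup hbdd 0) (h0 ▸ hD0 0)⟩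
  -- positive supremum case
  have hSbdd : ∀ z : E, BddAbove {α : ℝ | α ∈ Set.Ioo (0:ℝ) 1 ∧ z ∈ MRegion ψ P α} :=
    fun z => ⟨1, fun x hx => hx.1.2.le⟩
  have hnonemptyR : ∀ β : Set.Ioo (0:ℝ) A, (MRegion ψ P (β:ℝ)).Nonempty := by
    rintro ⟨β, hβ0, hβA⟩
    obtain ⟨z, hz⟩ := exists_lt_of_lt_ciSup (hβA.trans_eq hA_def)
    have hSne : {α : ℝ | α ∈ Set.Ioo (0:ℝ) 1 ∧ z ∈ MRegion ψ P α}.Nonempty := by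
      by_contra h
      rw [not_nonempty_iff_eq_empty] at h
      have hz0 : MDepth ψ P z = 0 := by
        unfold MDepth; rw [h, Real.sSup_empty]
      rw [hz0] at hz; linarith
    obtain ⟨γ, hγmem, hβγ⟩ := exists_lt_of_lt_csSup hSne hz
    exact ⟨z, hregion_anti β γ hβ0 hβγ.le hγmem.1.2 hγmem.2⟩
  have hdir : Directed (· ⊇ ·) (fun β : Set.Ioo (0:ℝ) A => MRegion ψ P (β:ℝ)) := by
    rintro ⟨β, hβ⟩ ⟨γ, hγ⟩
    have hmax : max β γ ∈ Set.Ioo (0:ℝ) A := ⟨lt_max_of_lt_left hβ.1, max_lt hβ.2 hγ.2⟩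
    refine ⟨⟨max β γ, hmax⟩, ?_, ?_⟩
    · exact hregion_anti β (max β γ) hβ.1 (le_max_left _ _) (lt_of_lt_of_le hmax.2 hA1)
    · exact hregion_anti γ (max β γ) hγ.1 (le_max_right _ _) (lt_of_lt_of_le hmax.2 hA1)
  haveI : Nonempty (Set.Ioo (0:ℝ) A) := ⟨⟨A/2, by constructor <;> linarith⟩⟩
  obtain ⟨zs, hzs⟩ := IsCompact.nonempty_iInter_of_directed_nonempty_isCompact_isClosed
    (fun β : Set.Ioo (0:ℝ) A => MRegion ψ P (β:ℝ)) hdir hnonemptyR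
    (fun β => hcompact _) (fun β => hclosed _)
  refine ⟨zs, le_antisymm (le_ciSup hbdd zs) ?_⟩
  by_contra hlt
  push_neg at hlt
  obtain ⟨β, hβ1, hβ2⟩ := exists_between (max_lt hlt hApos : max (MDepth ψ P zs) 0 < A)
  have hβ0 : 0 < β := (le_max_right _ _).trans_lt hβ1
  have hzmem : zs ∈ MRegion ψ P β := by
    have := Set.mem_iInter.1 hzs ⟨β, hβ0, hβ2⟩
    exact this
  have hle : β ≤ MDepth ψ P zs :=
    le_csSup (hSbdd zs) ⟨⟨hβ0, lt_of_lt_of_le hβ2 hA1⟩, hzmem⟩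
  have hgt : MDepth ψ P zs < β := (le_max_left _ _).trans_lt hβ1
  linarith
end
end
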